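/- A quasi-measure is continuous from above on closed sets: if (F_λ) is a decreasingly directed net of closed sets with intersection F, then μ(F_λ) converges decreasingly to μ(F). -/
import Mathlib


open Set MeasureTheory BoundedContinuousFunction Filter Topology

/-- An *image* is a set that is either open or closed. -/
def IsImage {X : Type*} [TopologicalSpace X] (A : Set X) : Prop := IsOpen A ∨ IsClosed A

/-- A (normalized, additive, compact-regular) quasi-measure on the images of `X`. -/
structure IsQuasiMeasure {X : Type*} [TopologicalSpace X] (μ : Set X → ℝ) : Prop where
  nonneg : ∀ A : Set X, IsImage A → 0 ≤ μ A
  normalized : μ Set.univ = 1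
  additive : ∀ A B : Set X, IsImage A → IsImage B → IsImage (A ∪ B) → Disjoint A B →
    μ (A ∪ B) = μ A + μ B
  regular : ∀ U : Set X, IsOpen U →
    IsLUB {r : ℝ | ∃ K : Set X, IsCompact K ∧ K ⊆ U ∧ μ K = r} (μ U)

/-- A quasi-measure is simple if it only takes the values 0 and 1. -/
def IsSimpleQM {X : Type*} [TopologicalSpace X] (μ : Set X → ℝ) : Prop :=
  ∀ A : Set X, IsImage A → μ A = 0 ∨ μ A = 1

/-- Membership in the singly generated algebra `A(c) = {φ ∘ c : φ ∈ C(ℝ,ℝ)}`. -/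
def InAlg {X : Type*} [TopologicalSpace X] (c f : X →ᵇ ℝ) : Prop :=
  ∃ φ : C(ℝ, ℝ), ∀ x, f x = φ (c x)

-- The quasi-integral of `a` with respect to `μ`: `∫ t dμ_a(t)` where `μ_a`
-- is the Borel probability measure extending `μ ∘ a⁻¹` (if it exists).
open Classical in
noncomputable def qint {X : Type*} [TopologicalSpace X] (μ : Set X → ℝ) (a : X →ᵇ ℝ) : ℝ :=
  if h : ∃ ν : MeasureTheory.Measure ℝ, MeasureTheory.IsProbabilityMeasure ν ∧
      ∀ A : Set ℝ, IsImage A → ν A = ENNReal.ofReal (μ (a ⁻¹' A))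
  then ∫ t, t ∂ h.choose else 0

/-- An image-transformation from `X` to `Y`. -/
structure IsImageTransformation {X Y : Type*} [TopologicalSpace X] [TopologicalSpace Y]
    (q : Set X → Set Y) : Prop where
  image : ∀ A : Set X, IsImage A → IsImage (q A)
  top : q Set.univ = Set.univ
  openMap : ∀ U : Set X, IsOpen U → IsOpen (q U)
  additive : ∀ A B : Set X, IsImage A → IsImage B → IsImage (A ∪ B) → Disjoint A B →
    q (A ∪ B) = q A ∪ q B ∧ Disjoint (q A) (q B)
  regular : ∀ U : Set X, IsOpen U → ∀ K : Set Y, IsCompact K → K ⊆ q U →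
    ∃ L : Set X, IsCompact L ∧ L ⊆ U ∧ K ⊆ q L

section Aux

variable {X : Type*} [TopologicalSpace X] {μ : Set X → ℝ}

lemma qm_compl (hμ : IsQuasiMeasure μ) {A : Set X} (hA : IsImage A) (hAc : IsImage Aᶜ) :
    μ A + μ Aᶜ = 1 := by
  have h := hμ.additive A Aᶜ hA hAc
    (by rw [Set.union_compl_self]; exact Or.inl isOpen_univ) disjoint_compl_right
  rw [Set.union_compl_self, hμ.normalized] at h
  linarith

lemma qm_compact_le_open (hμ : IsQuasiMeasure μ) {K U : Set X} (hK : IsCompact K)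
    (hU : IsOpen U) (hKU : K ⊆ U) : μ K ≤ μ U :=
  (hμ.regular U hU).1 ⟨K, hK, hKU, rfl⟩

lemma qm_mono_open (hμ : IsQuasiMeasure μ) {U V : Set X} (hU : IsOpen U) (hV : IsOpen V)
    (hUV : U ⊆ V) : μ U ≤ μ V := by
  refine (hμ.regular U hU).2 ?_
  rintro r ⟨K, hK, hKU, rfl⟩
  exact (hμ.regular V hV).1 ⟨K, hK, hKU.trans hUV, rfl⟩

lemma qm_mono_closed (hμ : IsQuasiMeasure μ) {A B : Set X} (hA : IsClosed A) (hB : IsClosed B)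
    (hAB : A ⊆ B) : μ A ≤ μ B := by
  have h1 := qm_compl hμ (Or.inr hA) (Or.inl hA.isOpen_compl)
  have h2 := qm_compl hμ (Or.inr hB) (Or.inl hB.isOpen_compl)
  have := qm_mono_open hμ hB.isOpen_compl hA.isOpen_compl (Set.compl_subset_compl.mpr hAB)
  linarith

end Aux

/-- continuity from above on closed sets along decreasingly directed nets. -/
theorem quasiMeasure_continuous_from_above {X : Type*} [TopologicalSpace X] [T2Space X]
    {ι : Type*} [Preorder ι] [IsDirected ι (· ≤ ·)] [Nonempty ι]
    (μ : Set X → ℝ) (hμ : IsQuasiMeasure μ)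
    (F : ι → Set X) (hclosed : ∀ i, IsClosed (F i)) (hanti : Antitone F) :
    Antitone (fun i => μ (F i)) ∧
      Filter.Tendsto (fun i => μ (F i)) Filter.atTop (nhds (μ (⋂ i, F i))) := by
  set S : Set X := ⋂ i, F i with hS
  have hSclosed : IsClosed S := isClosed_iInter hclosed
  have hmono : Antitone fun i => μ (F i) := fun i j hij =>
    qm_mono_closed hμ (hclosed j) (hclosed i) (hanti hij)
  refine ⟨hmono, ?_⟩
  rw [Metric.tendsto_nhds]
  intro ε hε
  -- use regularity of Sᶜ to find a compact K ⊆ Sᶜ with μ K > μ Sᶜ - ε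
  have hSc : IsOpen Sᶜ := hSclosed.isOpen_compl
  have hlub := hμ.regular Sᶜ hSc
  have hex : ∃ K : Set X, IsCompact K ∧ K ⊆ Sᶜ ∧ μ Sᶜ - ε < μ K := by
    by_contra hcon
    push_neg at hcon
    have hub : μ Sᶜ ≤ μ Sᶜ - ε := hlub.2 (by rintro r ⟨K, hK, hKS, rfl⟩; exact hcon K hK hKS)
    linarith
  obtain ⟨K, hK, hKS, hKμ⟩ := hex
  -- K is covered by the directed family (F i)ᶜ
  have hcover : K ⊆ ⋃ i, (F i)ᶜ := by
    rwa [← Set.compl_iInter]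
  obtain ⟨t, ht⟩ := hK.elim_finite_subcover (fun i => (F i)ᶜ)
    (fun i => (hclosed i).isOpen_compl) hcover
  obtain ⟨i0, hi0⟩ := t.exists_le
  have hKi0 : K ⊆ (F i0)ᶜ := by
    refine ht.trans ?_
    simp only [Set.iUnion_subset_iff]
    intro i hi
    exact Set.compl_subset_compl.mpr (hanti (hi0 i hi))
  rw [Filter.eventually_iff, Filter.mem_atTop_sets]
  refine ⟨i0, fun j hj => ?_⟩
  have hKj : K ⊆ (F j)ᶜ := hKi0.trans (Set.compl_subset_compl.mpr (hanti hj))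
  have h1 : μ K ≤ μ (F j)ᶜ :=
    qm_compact_le_open hμ hK (hclosed j).isOpen_compl hKj
  have h2 := qm_compl hμ (Or.inr (hclosed j)) (Or.inl (hclosed j).isOpen_compl)
  have h3 := qm_compl hμ (Or.inr hSclosed) (Or.inl hSc)
  have h4 : μ S ≤ μ (F j) :=
    qm_mono_closed hμ hSclosed (hclosed j) (Set.iInter_subset F j)
  simp only [Set.mem_setOf_eq, Real.dist_eq, abs_lt]
  constructor <;> linarith
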